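/- For every j with 1 ≤ j ≤ 2n−1 one has h/24 < a_j < h and b_j < 7/8. -/

import Mathlib

/-- `λ_j = 4 sin²(jπ/(4n))`. -/
noncomputable def lamRR (n j : ℕ) : ℝ :=
  4 * Real.sin ((j : ℝ) * Real.pi / (4 * (n : ℝ))) ^ 2

/-- `λ̃_j = (2/(n+1)) Σ_{i=1}^n sin²(inπ/(n+1)) / (4 sin²(iπ/(2(n+1))) + λ_j)`. -/
noncomputable def lamTildeRR (n j : ℕ) : ℝ :=
  (2 / ((n : ℝ) + 1)) * ∑ i ∈ Finset.Icc 1 n,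
    Real.sin ((i : ℝ) * (n : ℝ) * Real.pi / ((n : ℝ) + 1)) ^ 2 /
      (4 * Real.sin ((i : ℝ) * Real.pi / (2 * ((n : ℝ) + 1))) ^ 2 + lamRR n j)

section Helpers
open Real


-- sum over Icc 1 n of cos(2iπ/(n+1)) = -1
lemma sum_cos_two (n : ℕ) (hn : 1 ≤ n) :
    ∑ i ∈ Finset.Icc 1 n, Real.cos (2 * (i:ℝ) * π / ((n:ℝ)+1)) = -1 := by
  have h0 : ((n:ℝ)+1) ≠ 0 := by positivity
  have hprim := Complex.isPrimitiveRoot_exp (n+1) (Nat.succ_ne_zero n)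
  have hs := hprim.geom_sum_eq_zero (by omega : 1 < n + 1)
  have hre : ∑ i ∈ Finset.range (n+1), Real.cos (2 * (i:ℝ) * π / ((n:ℝ)+1)) = 0 := by
    have : ∀ i : ℕ, (Complex.exp (2 * ↑π * Complex.I / (↑(n+1))))^i
        = Complex.exp ((2 * (i:ℝ) * π / ((n:ℝ)+1) : ℝ) * Complex.I) := by
      intro i
      rw [← Complex.exp_nat_mul]
      congr 1
      push_cast
      field_simp
    calc ∑ i ∈ Finset.range (n+1), Real.cos (2 * (i:ℝ) * π / ((n:ℝ)+1))
        = (∑ i ∈ Finset.range (n+1), (Complex.exp (2 * ↑π * Complex.I / (↑(n+1))))^i).re := by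
          rw [Complex.re_sum]
          exact Finset.sum_congr rfl fun i _ => by rw [this i, Complex.exp_ofReal_mul_I_re]
      _ = 0 := by rw [hs]; simp
  have hsplit : ∑ i ∈ Finset.range (n+1), Real.cos (2 * (i:ℝ) * π / ((n:ℝ)+1))
      = Real.cos 0 + ∑ i ∈ Finset.Icc 1 n, Real.cos (2 * (i:ℝ) * π / ((n:ℝ)+1)) := by
    rw [← Finset.Ico_add_one_right_eq_Icc, Finset.sum_Ico_eq_sum_range]
    rw [Finset.sum_range_succ']
    rw [add_comm]
    congr 1
    · norm_num
    · exact Finset.sum_congr rfl fun i _ => by push_cast; ring_nf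
  rw [hsplit] at hre
  simp at hre
  linarith

lemma sum_sin_sq (n : ℕ) (hn : 1 ≤ n) :
    ∑ i ∈ Finset.Icc 1 n, Real.sin ((i:ℝ) * π / ((n:ℝ)+1)) ^ 2 = ((n:ℝ)+1)/2 := by
  have := sum_cos_two n hn
  have hrw : ∀ i : ℕ, Real.sin ((i:ℝ) * π / ((n:ℝ)+1)) ^ 2
      = 1/2 - Real.cos (2 * (i:ℝ) * π / ((n:ℝ)+1)) / 2 := by
    intro i
    have : 2 * (i:ℝ) * π / ((n:ℝ)+1) = 2 * ((i:ℝ) * π / ((n:ℝ)+1)) := by ring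
    rw [this, Real.cos_two_mul, Real.cos_sq']
    ring
  have h2 : ∑ x ∈ Finset.Icc 1 n, Real.cos (2 * (x:ℝ) * π / ((n:ℝ)+1)) / 2 = -1/2 := by
    rw [← Finset.sum_div, this]
  rw [Finset.sum_congr rfl fun i _ => hrw i, Finset.sum_sub_distrib, h2]
  simp [Nat.card_Icc]
  ring

lemma sum_cos_zero (n : ℕ) :
    ∑ i ∈ Finset.Icc 1 n, Real.cos ((i:ℝ) * π / ((n:ℝ)+1)) = 0 := by
  classical
  refine Finset.sum_involution (fun a _ => n + 1 - a) ?_ ?_ ?_ ?_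
  · intro a ha
    rw [Finset.mem_Icc] at ha
    have hcast : ((n + 1 - a : ℕ) : ℝ) = (n:ℝ) + 1 - a := by
      have : a ≤ n + 1 := by omega
      push_cast [Nat.cast_sub this]
      ring
    rw [hcast]
    have : ((n:ℝ) + 1 - a) * π / ((n:ℝ)+1) = π - (a:ℝ) * π / ((n:ℝ)+1) := by
      have h0 : ((n:ℝ)+1) ≠ 0 := by positivity
      field_simp
    rw [this, Real.cos_pi_sub]
    ring
  · intro a ha hfa
    rw [Finset.mem_Icc] at ha
    intro heq
    have h2a : 2 * a = n + 1 := by omega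
    apply hfa
    have : (a:ℝ) * π / ((n:ℝ)+1) = π / 2 := by
      have : ((n:ℝ) + 1) = 2 * a := by exact_mod_cast h2a.symm
      rw [this]
      have ha0 : (a:ℝ) ≠ 0 := by
        have : 1 ≤ a := ha.1
        positivity
      field_simp
    rw [this, Real.cos_pi_div_two]
  · intro a ha
    rw [Finset.mem_Icc] at ha ⊢
    omega
  · intro a ha
    rw [Finset.mem_Icc] at ha
    omega

lemma sum_cos_sq (n : ℕ) :
    ∑ i ∈ Finset.Icc 1 n, Real.cos ((i:ℝ) * π / (2*((n:ℝ)+1))) ^ 2 = (n:ℝ)/2 := by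
  have h := sum_cos_zero n
  have hrw : ∀ i : ℕ, Real.cos ((i:ℝ) * π / (2*((n:ℝ)+1))) ^ 2
      = 1/2 + Real.cos ((i:ℝ) * π / ((n:ℝ)+1)) / 2 := by
    intro i
    have h2 : (i:ℝ) * π / ((n:ℝ)+1) = 2 * ((i:ℝ) * π / (2*((n:ℝ)+1))) := by
      have h0 : ((n:ℝ)+1) ≠ 0 := by positivity
      field_simp
    rw [h2, Real.cos_two_mul]
    ring
  have h2 : ∑ x ∈ Finset.Icc 1 n, Real.cos ((x:ℝ) * π / ((n:ℝ)+1)) / 2 = 0 := by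
    rw [← Finset.sum_div, h]
    norm_num
  rw [Finset.sum_congr rfl fun i _ => hrw i, Finset.sum_add_distrib, h2]
  simp [Nat.card_Icc]
  ring

lemma lam_pos (n j : ℕ) (hn : 1 ≤ n) (hj1 : 1 ≤ j) (hj2 : j ≤ 2 * n - 1) :
    0 < lamRR n j := by
  unfold lamRR
  have hn' : (1:ℝ) ≤ (n:ℝ) := by exact_mod_cast hn
  have hj' : (1:ℝ) ≤ (j:ℝ) := by exact_mod_cast hj1
  have hx0 : 0 < (j:ℝ) * π / (4 * (n:ℝ)) := by positivity
  have hx1 : (j:ℝ) * π / (4 * (n:ℝ)) < π := by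
    rw [div_lt_iff₀ (by positivity)]
    have hj2' : (j:ℝ) ≤ 2 * (n:ℝ) - 1 := by
      have : (j:ℝ) ≤ ((2*n-1 : ℕ) : ℝ) := by exact_mod_cast hj2
      have : ((2*n-1 : ℕ) : ℝ) = 2*(n:ℝ) - 1 := by
        have : 1 ≤ 2*n := by omega
        push_cast [Nat.cast_sub this]; ring
      linarith [this ▸ (by exact_mod_cast hj2 : (j:ℝ) ≤ ((2*n-1:ℕ):ℝ))]
    nlinarith [Real.pi_pos]
  have := Real.sin_pos_of_pos_of_lt_pi hx0 hx1
  positivity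

lemma lam_lt_four (n j : ℕ) (hn : 1 ≤ n) (hj1 : 1 ≤ j) (hj2 : j ≤ 2 * n - 1) :
    lamRR n j < 4 := by
  unfold lamRR
  have hn' : (1:ℝ) ≤ (n:ℝ) := by exact_mod_cast hn
  have hj' : (1:ℝ) ≤ (j:ℝ) := by exact_mod_cast hj1
  have hj2' : (j:ℝ) ≤ 2 * (n:ℝ) - 1 := by
    have h1 : (j:ℝ) ≤ ((2*n-1 : ℕ) : ℝ) := by exact_mod_cast hj2
    have h2 : ((2*n-1 : ℕ) : ℝ) = 2*(n:ℝ) - 1 := by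
      have : 1 ≤ 2*n := by omega
      push_cast [Nat.cast_sub this]; ring
    linarith [h2 ▸ h1]
  have hx0 : 0 < (j:ℝ) * π / (4 * (n:ℝ)) := by positivity
  have hx1 : (j:ℝ) * π / (4 * (n:ℝ)) < π / 2 := by
    rw [div_lt_div_iff₀ (by positivity) (by norm_num)]
    nlinarith [Real.pi_pos]
  have hs1 : Real.sin ((j:ℝ) * π / (4 * (n:ℝ))) < 1 := by
    calc Real.sin ((j:ℝ) * π / (4 * (n:ℝ))) < Real.sin (π/2) := by
          exact Real.sin_lt_sin_of_lt_of_le_pi_div_two (by linarith) le_rfl hx1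
      _ = 1 := Real.sin_pi_div_two
  have hs0 : 0 < Real.sin ((j:ℝ) * π / (4 * (n:ℝ))) :=
    Real.sin_pos_of_pos_of_lt_pi hx0 (by linarith [Real.pi_pos])
  nlinarith

lemma num_eq (n i : ℕ) :
    Real.sin ((i:ℝ) * (n:ℝ) * π / ((n:ℝ)+1)) ^ 2 = Real.sin ((i:ℝ) * π / ((n:ℝ)+1)) ^ 2 := by
  have h0 : ((n:ℝ)+1) ≠ 0 := by positivity
  have h1 : (i:ℝ)*(n:ℝ)*π/((n:ℝ)+1) = (i:ℝ)*π - (i:ℝ)*π/((n:ℝ)+1) := by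
    field_simp; ring
  rw [h1, Real.sin_nat_mul_pi_sub, neg_sq, mul_pow, ← pow_mul, mul_comm i 2, pow_mul]
  norm_num

lemma tilde_gt (n j : ℕ) (hn : 1 ≤ n) (hl4 : lamRR n j < 4) (hl0 : 0 < lamRR n j) :
    1/8 < lamTildeRR n j := by
  unfold lamTildeRR
  have hc : (0:ℝ) < (n:ℝ) + 1 := by positivity
  have hne : (Finset.Icc 1 n).Nonempty := ⟨1, by simp [Finset.mem_Icc]; omega⟩
  have key : ∑ i ∈ Finset.Icc 1 n, Real.sin ((i:ℝ) * π / ((n:ℝ)+1)) ^ 2 / 8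
      < ∑ i ∈ Finset.Icc 1 n,
        Real.sin ((i : ℝ) * (n : ℝ) * π / ((n : ℝ) + 1)) ^ 2 /
          (4 * Real.sin ((i : ℝ) * π / (2 * ((n : ℝ) + 1))) ^ 2 + lamRR n j) := by
    apply Finset.sum_lt_sum_of_nonempty hne
    intro i hi
    rw [Finset.mem_Icc] at hi
    rw [num_eq]
    have hi1 : (1:ℝ) ≤ (i:ℝ) := by exact_mod_cast hi.1
    have hin : (i:ℝ) ≤ (n:ℝ) := by exact_mod_cast hi.2
    have hN : 0 < Real.sin ((i:ℝ) * π / ((n:ℝ)+1)) ^ 2 := by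
      have h0 : 0 < (i:ℝ) * π / ((n:ℝ)+1) := by positivity
      have h1 : (i:ℝ) * π / ((n:ℝ)+1) < π := by
        rw [div_lt_iff₀ hc]
        nlinarith [Real.pi_pos]
      have := Real.sin_pos_of_pos_of_lt_pi h0 h1
      positivity
    have hD : 4 * Real.sin ((i:ℝ) * π / (2 * ((n:ℝ)+1))) ^ 2 + lamRR n j < 8 := by
      nlinarith [Real.sin_sq_le_one ((i:ℝ) * π / (2 * ((n:ℝ)+1)))]
    have hD0 : 0 < 4 * Real.sin ((i:ℝ) * π / (2 * ((n:ℝ)+1))) ^ 2 + lamRR n j := by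
      nlinarith [sq_nonneg (Real.sin ((i:ℝ) * π / (2 * ((n:ℝ)+1))))]
    exact div_lt_div_of_pos_left hN hD0 hD
  have hsum : ∑ i ∈ Finset.Icc 1 n, Real.sin ((i:ℝ) * π / ((n:ℝ)+1)) ^ 2 / 8
      = ((n:ℝ)+1)/16 := by
    rw [← Finset.sum_div, sum_sin_sq n hn]
    ring
  rw [hsum] at key
  calc (1:ℝ)/8 = (2/((n:ℝ)+1)) * (((n:ℝ)+1)/16) := by field_simp; norm_num
    _ < _ := by
        apply mul_lt_mul_of_pos_left key
        positivity

lemma tilde_lt (n j : ℕ) (hn : 1 ≤ n) (hl0 : 0 < lamRR n j) :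
    lamTildeRR n j < 1 := by
  unfold lamTildeRR
  have hc : (0:ℝ) < (n:ℝ) + 1 := by positivity
  have hn' : (1:ℝ) ≤ (n:ℝ) := by exact_mod_cast hn
  have hne : (Finset.Icc 1 n).Nonempty := ⟨1, by simp [Finset.mem_Icc]; omega⟩
  have key : ∑ i ∈ Finset.Icc 1 n,
        Real.sin ((i : ℝ) * (n : ℝ) * π / ((n : ℝ) + 1)) ^ 2 /
          (4 * Real.sin ((i : ℝ) * π / (2 * ((n : ℝ) + 1))) ^ 2 + lamRR n j)
      < ∑ i ∈ Finset.Icc 1 n, Real.cos ((i:ℝ) * π / (2*((n:ℝ)+1))) ^ 2 := by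
    apply Finset.sum_lt_sum_of_nonempty hne
    intro i hi
    rw [Finset.mem_Icc] at hi
    rw [num_eq]
    have hi1 : (1:ℝ) ≤ (i:ℝ) := by exact_mod_cast hi.1
    have hin : (i:ℝ) ≤ (n:ℝ) := by exact_mod_cast hi.2
    set θ := (i:ℝ) * π / (2 * ((n:ℝ)+1)) with hθ
    have hθ0 : 0 < θ := by rw [hθ]; positivity
    have hθ1 : θ < π/2 := by
      rw [hθ, div_lt_div_iff₀ (by positivity) (by norm_num)]
      nlinarith [Real.pi_pos]
    have hsθ : 0 < Real.sin θ := Real.sin_pos_of_pos_of_lt_pi hθ0 (by linarith [Real.pi_pos])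
    have hcθ : 0 < Real.cos θ := Real.cos_pos_of_mem_Ioo ⟨by linarith [Real.pi_pos], hθ1⟩
    have hdouble : (i:ℝ) * π / ((n:ℝ)+1) = 2 * θ := by
      rw [hθ]; field_simp
    rw [hdouble, Real.sin_two_mul]
    have hD : 4 * Real.sin θ ^ 2 < 4 * Real.sin θ ^ 2 + lamRR n j := by linarith
    calc (2 * Real.sin θ * Real.cos θ) ^ 2 / (4 * Real.sin θ ^ 2 + lamRR n j)
        < (2 * Real.sin θ * Real.cos θ) ^ 2 / (4 * Real.sin θ ^ 2) := by
          apply div_lt_div_of_pos_left (by positivity) (by positivity) hD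
      _ = Real.cos θ ^ 2 := by
          field_simp
          ring
  rw [sum_cos_sq n] at key
  calc (2/((n:ℝ)+1)) * (∑ i ∈ Finset.Icc 1 n,
        Real.sin ((i : ℝ) * (n : ℝ) * π / ((n : ℝ) + 1)) ^ 2 /
          (4 * Real.sin ((i : ℝ) * π / (2 * ((n : ℝ) + 1))) ^ 2 + lamRR n j))
      < (2/((n:ℝ)+1)) * ((n:ℝ)/2) := by
        apply mul_lt_mul_of_pos_left key
        positivity
    _ = (n:ℝ)/((n:ℝ)+1) := by field_simp
    _ < 1 := by rw [div_lt_one hc]; linarith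

end Helpers

/-- `a_j = (h - (h/6)λ_j) λ̃_j` with `h = 1/(2n)`. -/
noncomputable def aRR (n j : ℕ) : ℝ :=
  (1 / (2 * (n : ℝ)) - (1 / (2 * (n : ℝ))) / 6 * lamRR n j) * lamTildeRR n j

/-- `b_j = 1 - (1 + λ_j/2) λ̃_j`. -/
noncomputable def bRR (n j : ℕ) : ℝ :=
  1 - (1 + lamRR n j / 2) * lamTildeRR n j

/-- for every `1 ≤ j ≤ 2n-1` (with `h = 1/(2n)`),
`h/24 < a_j < h` and `b_j < 7/8`. -/
theorem a_b_bounds (n : ℕ) (hn : 1 ≤ n) (h : ℝ) (hh : h = 1 / (2 * (n : ℝ)))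
    (j : ℕ) (hj1 : 1 ≤ j) (hj2 : j ≤ 2 * n - 1) :
    h / 24 < aRR n j ∧ aRR n j < h ∧ bRR n j < 7 / 8 := by
  have hl0 := lam_pos n j hn hj1 hj2
  have hl4 := lam_lt_four n j hn hj1 hj2
  have ht1 := tilde_gt n j hn hl4 hl0
  have ht2 := tilde_lt n j hn hl0
  have hn' : (1:ℝ) ≤ (n:ℝ) := by exact_mod_cast hn
  have hp : 0 < h := by rw [hh]; positivity
  have e1 : aRR n j = h * ((1 - lamRR n j / 6) * lamTildeRR n j) := by
    rw [hh]; unfold aRR; ring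
  have k1 : 1/24 < (1 - lamRR n j / 6) * lamTildeRR n j := by
    nlinarith [mul_pos (show (0:ℝ) < 4 - lamRR n j by linarith)
      (show (0:ℝ) < lamTildeRR n j - 1/8 by linarith)]
  have k2 : (1 - lamRR n j / 6) * lamTildeRR n j < 1 := by
    nlinarith [mul_pos hl0 (show (0:ℝ) < lamTildeRR n j by linarith)]
  refine ⟨?_, ?_, ?_⟩
  · rw [e1]; nlinarith [mul_lt_mul_of_pos_left k1 hp]
  · rw [e1]; nlinarith [mul_lt_mul_of_pos_left k2 hp]
  · unfold bRR
    nlinarith [mul_pos hl0 (show (0:ℝ) < lamTildeRR n j by linarith)]
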